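/- Let H and G be real Hilbert spaces, N_γ an extended seminorm on H with dual norm ‖·‖₋γ, V ⊆ H a finite-dimensional subspace with orthogonal projection P, δ > 0, and C₀ ≥ 1 a constant such that: ‖f − Pf‖₀ ≤ C₀ δ N_γ(f) for all f ∈ H (Jackson inequality) and N_γ(g) ≤ C₀ ‖g‖₀/δ for all g ∈ V (Bernstein inequality). Let A : H → G be an injective bounded linear operator with c‖f‖₋γ ≤ ‖Af‖_G ≤ C‖f‖₋γ for all f ∈ H (0 < c ≤ C), let Q be the orthogonal projection of G onto A(V), and R := (A|_V)⁻¹ ∘ Q : G → V. Then there exists a constant K depending only on c, C, C₀ such that: (i) ‖Rg‖₀ ≤ K ‖g‖_G / δ for all g ∈ G; (ii) ‖R(Af)‖₀ ≤ K ‖f‖₀ for all f ∈ H; (iii) for every function N_s : H → [0,∞] and δ_s ≥ 0 with ‖f − Pf‖₀ ≤ δ_s N_s(f) for all f ∈ H, the Galerkin solution f^{(V)} := R(Af) satisfies ‖f^{(V)} − f‖₀ ≤ K δ_s N_s(f) for all f ∈ H. -/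

import Mathlib

open scoped ENNReal RealInnerProductSpace

noncomputable section

/-- An extended seminorm on a real inner product space: a `[0,∞]`-valued function vanishing
at `0`, absolutely homogeneous and subadditive. -/
def IsExtSeminorm {H : Type*} [NormedAddCommGroup H] [InnerProductSpace ℝ H]
    (N : H → ℝ≥0∞) : Prop :=
  N 0 = 0 ∧ (∀ (c : ℝ) (f : H), N (c • f) = ENNReal.ofReal |c| * N f) ∧
    (∀ f g : H, N (f + g) ≤ N f + N g)

/-- The dual norm of an extended seminorm `N`:  `‖f‖_{N*} = sup {⟪f,g⟫ : N g ≤ 1}`. -/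
def dualNorm {H : Type*} [NormedAddCommGroup H] [InnerProductSpace ℝ H]
    (N : H → ℝ≥0∞) (f : H) : ℝ≥0∞ :=
  ⨆ g : {g : H // N g ≤ 1}, ENNReal.ofReal ⟪f, (g : H)⟫

/-- **Estimates for the Galerkin inversion** (Lemma A.2): under Jackson and Bernstein
inequalities for `N_γ` on the finite-dimensional space `V` and the smoothing property
`‖Af‖ ≍ ‖f‖_{−γ}`, the Galerkin inversion `R = (A|_V)⁻¹ Q` satisfies
(i) `‖Rg‖₀ ≤ K‖g‖/δ`, (ii) `‖RAf‖₀ ≤ K‖f‖₀`, and (iii) the Galerkin solution `f^{(V)} = RAf`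
inherits any approximation rate of the projection: `‖f^{(V)} − f‖₀ ≤ K δ_s N_s(f)`. -/
theorem galerkin_inversion_estimates
    {H G : Type*} [NormedAddCommGroup H] [InnerProductSpace ℝ H]
    [NormedAddCommGroup G] [InnerProductSpace ℝ G]
    (Nγ : H → ℝ≥0∞) (hNγ : IsExtSeminorm Nγ)
    (V : Submodule ℝ H) [FiniteDimensional ℝ V]
    (P : H → H) (hPmem : ∀ f, P f ∈ V)
    (hPorth : ∀ f : H, ∀ v ∈ V, ⟪f - P f, v⟫ = 0)
    (δ : ℝ) (hδ : 0 < δ) (C₀ : ℝ) (hC₀ : 1 ≤ C₀)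
    (hJack : ∀ f : H, ENNReal.ofReal ‖f - P f‖ ≤ ENNReal.ofReal (C₀ * δ) * Nγ f)
    (hBern : ∀ g ∈ V, Nγ g ≤ ENNReal.ofReal (C₀ * ‖g‖ / δ))
    (A : H →L[ℝ] G) (hAinj : Function.Injective A)
    (c C : ℝ) (hc : 0 < c) (hcC : c ≤ C)
    (hAlow : ∀ f : H, ENNReal.ofReal c * dualNorm Nγ f ≤ ENNReal.ofReal ‖A f‖)
    (hAup : ∀ f : H, ENNReal.ofReal ‖A f‖ ≤ ENNReal.ofReal C * dualNorm Nγ f)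
    -- Q : orthogonal projection of G onto A(V); R = (A|_V)⁻¹ ∘ Q
    (Q : G → G) (hQmem : ∀ g : G, Q g ∈ (⇑A) '' (V : Set H))
    (hQorth : ∀ g : G, ∀ v ∈ V, ⟪g - Q g, A v⟫ = 0)
    (R : G → H) (hRmem : ∀ g : G, R g ∈ V) (hRQ : ∀ g : G, A (R g) = Q g) :
    ∃ K : ℝ, 0 < K ∧
      (∀ g : G, ‖R g‖ ≤ K * ‖g‖ / δ) ∧
      (∀ f : H, ‖R (A f)‖ ≤ K * ‖f‖) ∧
      (∀ (Ns : H → ℝ≥0∞) (δs : ℝ), 0 ≤ δs →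
        (∀ f : H, ENNReal.ofReal ‖f - P f‖ ≤ ENNReal.ofReal δs * Ns f) →
        ∀ f : H, ENNReal.ofReal ‖R (A f) - f‖ ≤ ENNReal.ofReal (K * δs) * Ns f) := by

  have hC : 0 < C := lt_of_lt_of_le hc hcC
  have hC₀pos : (0:ℝ) < C₀ := lt_of_lt_of_le zero_lt_one hC₀
  -- Lemma A: stability on V
  have lemA : ∀ h ∈ V, c * δ * ‖h‖ ≤ C₀ * ‖A h‖ := by
    intro h hh
    rcases eq_or_ne h 0 with rfl | hne
    · simp
    have hnorm : 0 < ‖h‖ := norm_pos_iff.mpr hne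
    set t : ℝ := δ / (C₀ * ‖h‖) with ht
    have htpos : 0 < t := by positivity
    have hg1 : Nγ (t • h) ≤ 1 := by
      rw [hNγ.2.1]
      have hmul : t * (C₀ * ‖h‖ / δ) = 1 := by
        rw [ht]; field_simp
      calc ENNReal.ofReal |t| * Nγ h
          ≤ ENNReal.ofReal t * ENNReal.ofReal (C₀ * ‖h‖ / δ) := by
            rw [abs_of_pos htpos]
            exact mul_le_mul_right (hBern h hh) _
        _ = ENNReal.ofReal (t * (C₀ * ‖h‖ / δ)) := (ENNReal.ofReal_mul htpos.le).symm
        _ = 1 := by rw [hmul, ENNReal.ofReal_one]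
    have hdl : ENNReal.ofReal (δ * ‖h‖ / C₀) ≤ dualNorm Nγ h := by
      have hle := le_iSup (fun g : {g : H // Nγ g ≤ 1} => ENNReal.ofReal ⟪h, (g : H)⟫)
        ⟨t • h, hg1⟩
      refine le_trans (le_of_eq ?_) hle
      simp only
      congr 1
      rw [real_inner_smul_right, real_inner_self_eq_norm_sq, ht]
      field_simp
    have h2 : ENNReal.ofReal (c * (δ * ‖h‖ / C₀)) ≤ ENNReal.ofReal ‖A h‖ := by
      rw [ENNReal.ofReal_mul hc.le]
      exact le_trans (mul_le_mul_right hdl _) (hAlow h)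
    have h3 : c * (δ * ‖h‖ / C₀) ≤ ‖A h‖ :=
      (ENNReal.ofReal_le_ofReal_iff (norm_nonneg _)).mp h2
    have h4 := mul_le_mul_of_nonneg_left h3 hC₀pos.le
    calc c * δ * ‖h‖ = C₀ * (c * (δ * ‖h‖ / C₀)) := by
          field_simp
      _ ≤ C₀ * ‖A h‖ := h4
  -- Lemma B: Q is a contraction
  have lemB : ∀ g : G, ‖Q g‖ ≤ ‖g‖ := by
    intro g
    have ho : ⟪g - Q g, Q g⟫ = 0 := by
      have := hQorth g (R g) (hRmem g)
      rwa [hRQ g] at this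
    have h1 : ‖g‖ ^ 2 = ‖g - Q g‖ ^ 2 + 2 * ⟪g - Q g, Q g⟫ + ‖Q g‖ ^ 2 := by
      rw [← norm_add_sq_real, sub_add_cancel]
    nlinarith [norm_nonneg (g - Q g), norm_nonneg g, norm_nonneg (Q g)]
  -- Lemma E: P is contraction on the complement
  have lemE : ∀ f : H, ‖f - P f‖ ≤ ‖f‖ := by
    intro f
    have ho : ⟪f - P f, P f⟫ = 0 := hPorth f (P f) (hPmem f)
    have h1 : ‖f‖ ^ 2 = ‖f - P f‖ ^ 2 + 2 * ⟪f - P f, P f⟫ + ‖P f‖ ^ 2 := by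
      rw [← norm_add_sq_real, sub_add_cancel]
    nlinarith [norm_nonneg (P f), norm_nonneg f, norm_nonneg (f - P f)]
  -- Lemma C: dual norm bound for the residual
  have lemC : ∀ f : H, dualNorm Nγ (f - P f) ≤ ENNReal.ofReal (C₀ * δ * ‖f - P f‖) := by
    intro f
    apply iSup_le
    rintro ⟨g, hg⟩
    have hinner : ⟪f - P f, g⟫ = ⟪f - P f, g - P g⟫ := by
      have h0 := hPorth f (P g) (hPmem g)
      rw [inner_sub_right, h0]
      ring
    calc ENNReal.ofReal ⟪f - P f, (g : H)⟫
        = ENNReal.ofReal ⟪f - P f, g - P g⟫ := by rw [hinner]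
      _ ≤ ENNReal.ofReal (‖f - P f‖ * ‖g - P g‖) :=
          ENNReal.ofReal_le_ofReal (real_inner_le_norm _ _)
      _ = ENNReal.ofReal ‖f - P f‖ * ENNReal.ofReal ‖g - P g‖ :=
          ENNReal.ofReal_mul (norm_nonneg _)
      _ ≤ ENNReal.ofReal ‖f - P f‖ * (ENNReal.ofReal (C₀ * δ) * Nγ g) :=
          mul_le_mul_right (hJack g) _
      _ ≤ ENNReal.ofReal ‖f - P f‖ * (ENNReal.ofReal (C₀ * δ) * 1) := by
          exact mul_le_mul_right (mul_le_mul_right hg _) _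
      _ = ENNReal.ofReal (C₀ * δ * ‖f - P f‖) := by
          rw [mul_one, ← ENNReal.ofReal_mul (norm_nonneg _), mul_comm]
  have lemC' : ∀ f : H, ‖A (f - P f)‖ ≤ C * (C₀ * δ * ‖f - P f‖) := by
    intro f
    have h1 : ENNReal.ofReal ‖A (f - P f)‖ ≤ ENNReal.ofReal (C * (C₀ * δ * ‖f - P f‖)) := by
      calc ENNReal.ofReal ‖A (f - P f)‖ ≤ ENNReal.ofReal C * dualNorm Nγ (f - P f) := hAup _
        _ ≤ ENNReal.ofReal C * ENNReal.ofReal (C₀ * δ * ‖f - P f‖) :=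
            mul_le_mul_right (lemC f) _
        _ = ENNReal.ofReal (C * (C₀ * δ * ‖f - P f‖)) := (ENNReal.ofReal_mul hC.le).symm
    exact (ENNReal.ofReal_le_ofReal_iff (by positivity)).mp h1
  -- Lemma D: quasi-optimality
  have lemD : ∀ f : H, ‖R (A f) - f‖ ≤ (1 + C * C₀ ^ 2 / c) * ‖f - P f‖ := by
    intro f
    set h : H := R (A f) - P f with hh
    have hhV : h ∈ V := V.sub_mem (hRmem _) (hPmem f)
    have hAh : ‖A h‖ ≤ ‖A (f - P f)‖ := by
      have horth : ⟪A f - Q (A f), A h⟫ = 0 := hQorth (A f) h hhV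
      have e1 : A h = Q (A f) - A (P f) := by rw [hh, map_sub, hRQ]
      have e2 : A (f - P f) = A f - A (P f) := map_sub _ _ _
      have hexp : ⟪A h, A h⟫ = ⟪A (f - P f), A h⟫ := by
        rw [inner_sub_left] at horth
        nth_rewrite 1 [e1]
        rw [e2, inner_sub_left, inner_sub_left]
        linarith
      have hcs : ⟪A (f - P f), A h⟫ ≤ ‖A (f - P f)‖ * ‖A h‖ := real_inner_le_norm _ _
      have hsq : ‖A h‖ ^ 2 ≤ ‖A (f - P f)‖ * ‖A h‖ := by
        rw [← real_inner_self_eq_norm_sq]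
        linarith
      rcases (norm_nonneg (A h)).eq_or_lt with h0 | h0
      · rw [← h0]; exact norm_nonneg _
      · nlinarith
    have hA1 := lemA h hhV
    have h2 : c * δ * ‖h‖ ≤ C₀ * (C * (C₀ * δ * ‖f - P f‖)) :=
      le_trans hA1 (mul_le_mul_of_nonneg_left (le_trans hAh (lemC' f)) hC₀pos.le)
    have h5 : ‖h‖ ≤ C * C₀ ^ 2 / c * ‖f - P f‖ := by
      rw [div_mul_eq_mul_div, le_div_iff₀ hc]
      have h4 : δ * (‖h‖ * c) ≤ δ * (C * C₀ ^ 2 * ‖f - P f‖) := by nlinarith [h2]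
      exact le_of_mul_le_mul_left h4 hδ
    have htri : ‖R (A f) - f‖ ≤ ‖h‖ + ‖f - P f‖ := by
      have he : R (A f) - f = h - (f - P f) := by rw [hh]; abel
      rw [he]
      exact norm_sub_le _ _
    nlinarith [htri, h5]
  refine ⟨2 + C₀ / c + C * C₀ ^ 2 / c, by positivity, ?_, ?_, ?_⟩
  · -- (i)
    intro g
    have h1 : c * δ * ‖R g‖ ≤ C₀ * ‖A (R g)‖ := lemA _ (hRmem g)
    rw [hRQ] at h1
    rw [le_div_iff₀ hδ]
    have hKc : C₀ ≤ (2 + C₀ / c + C * C₀ ^ 2 / c) * c := by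
      have he : (2 + C₀ / c + C * C₀ ^ 2 / c) * c = 2 * c + C₀ + C * C₀ ^ 2 := by
        field_simp
      rw [he]
      nlinarith
    have h3 : c * (‖R g‖ * δ) ≤ c * ((2 + C₀ / c + C * C₀ ^ 2 / c) * ‖g‖) := by
      calc c * (‖R g‖ * δ) = c * δ * ‖R g‖ := by ring
        _ ≤ C₀ * ‖Q g‖ := h1
        _ ≤ C₀ * ‖g‖ := mul_le_mul_of_nonneg_left (lemB g) hC₀pos.le
        _ ≤ (2 + C₀ / c + C * C₀ ^ 2 / c) * c * ‖g‖ :=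
            mul_le_mul_of_nonneg_right hKc (norm_nonneg g)
        _ = c * ((2 + C₀ / c + C * C₀ ^ 2 / c) * ‖g‖) := by ring
    exact le_of_mul_le_mul_left h3 hc
  · -- (ii)
    intro f
    have h1 := lemD f
    have h2 := lemE f
    have h3 : (1 + C * C₀ ^ 2 / c) * ‖f - P f‖ ≤ (1 + C * C₀ ^ 2 / c) * ‖f‖ :=
      mul_le_mul_of_nonneg_left h2 (by positivity)
    have htri : ‖R (A f)‖ ≤ ‖R (A f) - f‖ + ‖f‖ := by
      calc ‖R (A f)‖ = ‖R (A f) - f + f‖ := by rw [sub_add_cancel]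
        _ ≤ ‖R (A f) - f‖ + ‖f‖ := norm_add_le _ _
    have h4 : 0 ≤ C₀ / c * ‖f‖ := by positivity
    nlinarith [h1, h3, htri, h4]
  · -- (iii)
    intro Ns δs hδs hNs f
    have h1 := lemD f
    calc ENNReal.ofReal ‖R (A f) - f‖
        ≤ ENNReal.ofReal ((1 + C * C₀ ^ 2 / c) * ‖f - P f‖) := ENNReal.ofReal_le_ofReal h1
      _ = ENNReal.ofReal (1 + C * C₀ ^ 2 / c) * ENNReal.ofReal ‖f - P f‖ :=
          ENNReal.ofReal_mul (by positivity)
      _ ≤ ENNReal.ofReal (1 + C * C₀ ^ 2 / c) * (ENNReal.ofReal δs * Ns f) :=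
          mul_le_mul_right (hNs f) _
      _ = ENNReal.ofReal ((1 + C * C₀ ^ 2 / c) * δs) * Ns f := by
          rw [← mul_assoc, ← ENNReal.ofReal_mul (by positivity)]
      _ ≤ ENNReal.ofReal ((2 + C₀ / c + C * C₀ ^ 2 / c) * δs) * Ns f := by
          refine mul_le_mul_left (ENNReal.ofReal_le_ofReal ?_) _
          have hq : 0 ≤ C₀ / c := by positivity
          exact mul_le_mul_of_nonneg_right (by linarith) hδs

end
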